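/- arXiv:0811.4677 — 3 statements merged into one kernel-verified Lean document; each statement's English description precedes it below -/
import Mathlib

section
/- Let P be a probability measure on Θ, let θ_0 ∈ Θ, and let R : Θ × X → [0,∞) be measurable with respect to a probability measure Q on X such that ∫_X R(θ, x) dQ(x) ≤ 1 for all θ. Suppose W ⊂ Θ is measurable with P(W) > 0, and suppose ∫_X R(θ,x)^{-1/2} dQ(x) ≤ e^{(3/2)s} for every θ ∈ W (with s ≥ 0). Then for every c > 0, Q( { x : ∫_Θ R(θ,x) dP(θ) ≤ e^{-s(3+2c)} P(W) } ) ≤ e^{-sc}. -/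
open MeasureTheory Real
open scoped ENNReal

/-- Evidence lower bound (abstract form of Lemma 5.2): if `∫ R(θ,·) dQ ≤ 1` for all `θ`,
`P(W) > 0` and `∫ R(θ,·)^{-1/2} dQ ≤ e^{(3/2)s}` for all `θ ∈ W`, then for every `c > 0`
`Q({x : ∫ R(θ,x) dP(θ) ≤ e^{-s(3+2c)} P(W)}) ≤ e^{-sc}`. -/
theorem evidence_lower_bound
    {Θ X : Type*} [MeasurableSpace Θ] [MeasurableSpace X]
    (P : Measure Θ) [IsProbabilityMeasure P]
    (Q : Measure X) [IsProbabilityMeasure Q]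
    (R : Θ × X → ℝ≥0∞) (hR : Measurable R)
    (hRint : ∀ θ, ∫⁻ x, R (θ, x) ∂Q ≤ 1)
    (W : Set Θ) (hW : MeasurableSet W) (hWpos : 0 < P W)
    (s : ℝ) (hs : 0 ≤ s)
    (hW2 : ∀ θ ∈ W, ∫⁻ x, (R (θ, x)) ^ (-(1 : ℝ) / 2) ∂Q
      ≤ ENNReal.ofReal (Real.exp ((3 / 2) * s)))
    (c : ℝ) (hc : 0 < c) :
    Q {x | ∫⁻ θ, R (θ, x) ∂P ≤ ENNReal.ofReal (Real.exp (-(s * (3 + 2 * c)))) * P W}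
      ≤ ENNReal.ofReal (Real.exp (-(s * c))) := by
  have hPW1 : P W ≤ 1 := prob_le_one
  have hPWne : P W ≠ ∞ := (lt_of_le_of_lt hPW1 ENNReal.one_lt_top).ne
  have hPW0 : P W ≠ 0 := hWpos.ne'
  set u : ℝ := s * (3 + 2 * c) with hu
  set E : ℝ≥0∞ := ENNReal.ofReal (Real.exp ((3 / 2) * s)) with hE
  set T : ℝ≥0∞ := ENNReal.ofReal (Real.exp (u / 2)) * P W with hT
  have hT0 : T ≠ 0 := by
    simp [hT, hPW0, ENNReal.ofReal_eq_zero, not_le, Real.exp_pos]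
  have hTtop : T ≠ ∞ := ENNReal.mul_ne_top ENNReal.ofReal_ne_top hPWne
  -- the functions
  set f : Θ × X → ℝ≥0∞ := fun p => R p ^ (-(1 : ℝ) / 2) with hf
  have hfm : Measurable f := hR.pow_const _
  set Z : X → ℝ≥0∞ := fun x => ∫⁻ θ in W, f (θ, x) ∂P with hZ
  have hZm : Measurable Z := hfm.lintegral_prod_left'
  set A : X → ℝ≥0∞ := fun x => ∫⁻ θ in W, R (θ, x) ^ ((1 : ℝ) / 2) ∂P with hA
  -- Step A : ∫ Z dQ ≤ E * P W  (Fubini)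
  have hZint : ∫⁻ x, Z x ∂Q ≤ E * P W := by
    have hswap : ∫⁻ x, Z x ∂Q = ∫⁻ θ in W, ∫⁻ x, f (θ, x) ∂Q ∂P :=
      (lintegral_lintegral_swap (μ := P.restrict W) (ν := Q)
        (f := fun θ x => f (θ, x)) hfm.aemeasurable).symm
    rw [hswap]
    calc ∫⁻ θ in W, ∫⁻ x, f (θ, x) ∂Q ∂P ≤ ∫⁻ _ in W, E ∂P :=
          setLIntegral_mono measurable_const (fun θ hθ => hW2 θ hθ)
      _ = E * P W := setLIntegral_const W E
  -- Step B : for Q-a.e. x, for P-a.e. θ ∈ W, R (θ, x) ≠ 0 and R (θ, x) ≠ ∞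
  set g : Θ × X → ℝ≥0∞ := fun p => Set.indicator {p : Θ × X | R p = 0 ∨ R p = ∞} 1 p with hg
  have hbadm : MeasurableSet {p : Θ × X | R p = 0 ∨ R p = ∞} := by
    have : {p : Θ × X | R p = 0 ∨ R p = ∞} = R ⁻¹' {0} ∪ R ⁻¹' {∞} := by
      ext p; simp [Set.mem_preimage]
    rw [this]
    exact (hR (measurableSet_singleton 0)).union (hR (measurableSet_singleton ∞))
  have hgm : Measurable g := measurable_const.indicator hbadm
  have hsection : ∀ θ ∈ W, ∫⁻ x, g (θ, x) ∂Q = 0 := by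
    intro θ hθ
    have h1 : ∀ᵐ x ∂Q, R (θ, x) < ∞ :=
      ae_lt_top (hR.comp measurable_prodMk_left)
        (lt_of_le_of_lt (hRint θ) ENNReal.one_lt_top).ne
    have h2 : ∀ᵐ x ∂Q, R (θ, x) ^ (-(1 : ℝ) / 2) < ∞ :=
      ae_lt_top (hfm.comp measurable_prodMk_left)
        (lt_of_le_of_lt (hW2 θ hθ) ENNReal.ofReal_lt_top).ne
    have : ∀ᵐ x ∂Q, g (θ, x) = 0 := by
      filter_upwards [h1, h2] with x hx1 hx2
      have hR0 : R (θ, x) ≠ 0 := by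
        intro h0
        rw [h0, ENNReal.zero_rpow_of_neg (by norm_num)] at hx2
        exact absurd hx2 (lt_irrefl _)
      simp [hg, Set.indicator_apply, hR0, hx1.ne]
    calc ∫⁻ x, g (θ, x) ∂Q = ∫⁻ _, (0 : ℝ≥0∞) ∂Q := lintegral_congr_ae this
      _ = 0 := lintegral_zero
  have hgood : ∀ᵐ x ∂Q, ∀ᵐ θ ∂(P.restrict W), R (θ, x) ≠ 0 ∧ R (θ, x) ≠ ∞ := by
    have hdouble : ∫⁻ x, ∫⁻ θ in W, g (θ, x) ∂P ∂Q = 0 := by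
      rw [← lintegral_lintegral_swap (μ := P.restrict W) (ν := Q)
        (f := fun θ x => g (θ, x)) hgm.aemeasurable]
      calc ∫⁻ θ in W, ∫⁻ x, g (θ, x) ∂Q ∂P
          = ∫⁻ _ in W, (0 : ℝ≥0∞) ∂P :=
            setLIntegral_congr_fun hW (fun θ hθ => hsection θ hθ)
        _ = 0 := lintegral_zero
    have hae : ∀ᵐ x ∂Q, ∫⁻ θ in W, g (θ, x) ∂P = 0 := by
      have hm : Measurable fun x => ∫⁻ θ in W, g (θ, x) ∂P :=
        hgm.lintegral_prod_left'
      exact (lintegral_eq_zero_iff hm).mp hdouble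
    filter_upwards [hae] with x hx
    have hx' : ∀ᵐ θ ∂(P.restrict W), g (θ, x) = 0 :=
      (lintegral_eq_zero_iff (hgm.comp measurable_prodMk_right)).mp hx
    filter_upwards [hx'] with θ hθ
    constructor
    · intro h0
      have h1 : g (θ, x) = 1 := by simp [hg, Set.indicator_apply, h0]
      rw [hθ] at h1; exact zero_ne_one h1
    · intro htop
      have h1 : g (θ, x) = 1 := by simp [hg, Set.indicator_apply, htop]
      rw [hθ] at h1; exact zero_ne_one h1
  -- square root identity
  have hsqeq : ∀ t : ℝ≥0∞, t ^ (1 / (2:ℝ)) * t ^ (1 / (2:ℝ)) = t := by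
    intro t
    rw [← ENNReal.rpow_add_of_nonneg _ _ (by norm_num) (by norm_num)]
    norm_num
  have hconj : Real.HolderConjugate 2 2 := ⟨by norm_num, by norm_num, by norm_num⟩
  -- Step C : Cauchy–Schwarz, a.e. x : (P W)^2 ≤ A x * Z x
  have hCS : ∀ᵐ x ∂Q, P W * P W ≤ A x * Z x := by
    filter_upwards [hgood] with x hx
    have h1m : AEMeasurable (fun θ => R (θ, x) ^ ((1:ℝ)/4)) (P.restrict W) :=
      ((hR.comp measurable_prodMk_right).pow_const _).aemeasurable
    have h2m : AEMeasurable (fun θ => R (θ, x) ^ (-(1:ℝ)/4)) (P.restrict W) :=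
      ((hR.comp measurable_prodMk_right).pow_const _).aemeasurable
    have key := ENNReal.lintegral_mul_le_Lp_mul_Lq (P.restrict W) hconj h1m h2m
    have hlhs : (∫⁻ θ in W, ((fun θ => R (θ, x) ^ ((1:ℝ)/4)) * fun θ => R (θ, x) ^ (-(1:ℝ)/4)) θ ∂P) = P W := by
      have heq : ∀ᵐ θ ∂(P.restrict W),
          ((fun θ => R (θ, x) ^ ((1:ℝ)/4)) * fun θ => R (θ, x) ^ (-(1:ℝ)/4)) θ = 1 := by
        filter_upwards [hx] with θ hθ
        simp only [Pi.mul_apply]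
        rw [← ENNReal.rpow_add _ _ hθ.1 hθ.2]
        norm_num
      rw [lintegral_congr_ae heq, lintegral_one]
      simp
    have hr1 : (∫⁻ θ in W, ((fun θ => R (θ, x) ^ ((1:ℝ)/4)) θ) ^ (2:ℝ) ∂P) = A x := by
      apply lintegral_congr; intro θ
      rw [← ENNReal.rpow_mul]
      norm_num
    have hr2 : (∫⁻ θ in W, ((fun θ => R (θ, x) ^ (-(1:ℝ)/4)) θ) ^ (2:ℝ) ∂P) = Z x := by
      apply lintegral_congr; intro θ
      simp only [hZ, hf, ← ENNReal.rpow_mul]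
      congr 1; norm_num
    rw [hlhs, hr1, hr2] at key
    calc P W * P W ≤ (A x ^ (1/(2:ℝ)) * Z x ^ (1/(2:ℝ))) * (A x ^ (1/(2:ℝ)) * Z x ^ (1/(2:ℝ))) :=
          mul_le_mul' key key
      _ = A x * Z x := by rw [mul_mul_mul_comm, hsqeq, hsqeq]
  -- Step D : A x ≤ (∫ R)^{1/2} (P W)^{1/2}
  have hAD : ∀ x, A x ≤ (∫⁻ θ in W, R (θ, x) ∂P) ^ (1/(2:ℝ)) * (P W) ^ (1/(2:ℝ)) := by
    intro x
    have h1m : AEMeasurable (fun θ => R (θ, x) ^ ((1:ℝ)/2)) (P.restrict W) :=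
      ((hR.comp measurable_prodMk_right).pow_const _).aemeasurable
    have key := ENNReal.lintegral_mul_le_Lp_mul_Lq (P.restrict W) hconj h1m
      (aemeasurable_const (b := (1 : ℝ≥0∞)))
    simp only [Pi.mul_apply, mul_one, ENNReal.one_rpow, lintegral_one,
      Measure.restrict_apply_univ] at key
    have hr1 : (∫⁻ θ in W, (R (θ, x) ^ ((1:ℝ)/2)) ^ (2:ℝ) ∂P)
        = ∫⁻ θ in W, R (θ, x) ∂P := by
      apply lintegral_congr; intro θ
      rw [← ENNReal.rpow_mul]
      norm_num
    rw [hr1] at key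
    exact key
  -- Step E : on the event, T ≤ Z x (a.e.)
  have hsub : ∀ᵐ x ∂Q,
      x ∈ {x | ∫⁻ θ, R (θ, x) ∂P ≤ ENNReal.ofReal (Real.exp (-u)) * P W} → T ≤ Z x := by
    filter_upwards [hCS] with x hx hxev
    have hb : ∫⁻ θ in W, R (θ, x) ∂P ≤ ENNReal.ofReal (Real.exp (-u)) * P W :=
      le_trans (setLIntegral_le_lintegral W _) hxev
    have hor : (ENNReal.ofReal (Real.exp (-u))) ^ (1/(2:ℝ)) = ENNReal.ofReal (Real.exp (-u/2)) := by
      rw [ENNReal.ofReal_rpow_of_pos (Real.exp_pos _), ← Real.exp_mul]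
      congr 1; ring
    have hAle : A x ≤ ENNReal.ofReal (Real.exp (-u/2)) * P W := by
      calc A x ≤ (∫⁻ θ in W, R (θ, x) ∂P) ^ (1/(2:ℝ)) * (P W) ^ (1/(2:ℝ)) := hAD x
        _ ≤ (ENNReal.ofReal (Real.exp (-u)) * P W) ^ (1/(2:ℝ)) * (P W) ^ (1/(2:ℝ)) := by
            gcongr
        _ = ENNReal.ofReal (Real.exp (-u/2)) * P W := by
            rw [ENNReal.mul_rpow_of_nonneg _ _ (by norm_num), mul_assoc, hsqeq, hor]
    have hA0 : A x ≠ 0 := by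
      intro h0
      rw [h0, zero_mul] at hx
      rcases mul_eq_zero.mp (le_antisymm hx zero_le) with h | h <;> exact hPW0 h
    have hAtop : A x ≠ ∞ :=
      (lt_of_le_of_lt hAle (lt_of_le_of_ne le_top
        (ENNReal.mul_ne_top ENNReal.ofReal_ne_top hPWne))).ne
    have hmain : T * A x ≤ Z x * A x := by
      calc T * A x ≤ T * (ENNReal.ofReal (Real.exp (-u/2)) * P W) := mul_le_mul_right hAle T
        _ = (ENNReal.ofReal (Real.exp (u/2)) * ENNReal.ofReal (Real.exp (-u/2))) * (P W * P W) := by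
            rw [hT, mul_mul_mul_comm]
        _ = P W * P W := by
            rw [← ENNReal.ofReal_mul (Real.exp_pos _).le, ← Real.exp_add]
            have h0 : u / 2 + -u / 2 = 0 := by ring
            rw [h0, Real.exp_zero, ENNReal.ofReal_one, one_mul]
        _ ≤ A x * Z x := hx
        _ = Z x * A x := mul_comm _ _
    exact (ENNReal.mul_le_mul_iff_left hA0 hAtop).mp hmain
  -- Step F : Markov
  calc Q {x | ∫⁻ θ, R (θ, x) ∂P ≤ ENNReal.ofReal (Real.exp (-u)) * P W}
      ≤ Q {x | T ≤ Z x} := by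
        apply measure_mono_ae
        filter_upwards [hsub] with x hx
        exact hx
    _ ≤ (∫⁻ x, Z x ∂Q) / T := meas_ge_le_lintegral_div hZm.aemeasurable hT0 hTtop
    _ ≤ (E * P W) / T := by gcongr
    _ ≤ ENNReal.ofReal (Real.exp (-(s * c))) := by
        rw [ENNReal.div_le_iff hT0 hTtop, hT, ← mul_assoc,
          ← ENNReal.ofReal_mul (Real.exp_pos _).le, ← Real.exp_add]
        have harith : -(s * c) + u / 2 = 3 / 2 * s := by rw [hu]; ring
        rw [harith]
end

section
/- Fix 0 < β ≤ 1/2 and 0 < α < 1. Let Q be a probability measure on X, let Π be a finite measure on a set S of parameters, and let R : S × X → [0,∞) be measurable such that ∫_X R(θ,x)^{1/2} dQ(x) ≤ e^{-s/2} for all θ ∈ S and some s ≥ 0. Then ∫_X ( ∫_S R(θ,x)^β dΠ(θ) )^α dQ(x) ≤ e^{-βαs} Π(S)^α. -/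
open MeasureTheory Real
open scoped ENNReal

/-- Jensen-type bound: for a finite measure `μ` and `0 < p ≤ 1`,
`∫ f^p dμ ≤ (∫ f dμ)^p * μ(univ)^(1-p)`. -/
lemma aux_rpow_lintegral_le {Y : Type*} [MeasurableSpace Y] (μ : Measure Y)
    (f : Y → ℝ≥0∞) (hf : AEMeasurable f μ) {p : ℝ} (hp0 : 0 < p) (hp1 : p ≤ 1) :
    ∫⁻ a, f a ^ p ∂μ ≤ (∫⁻ a, f a ∂μ) ^ p * μ Set.univ ^ (1 - p) := by
  rcases eq_or_lt_of_le hp1 with h1 | h1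
  · subst h1; simp
  · have hpq : Real.HolderConjugate (1 / p) (1 / (1 - p)) := by
      constructor
      · rw [one_div, one_div, inv_inv, inv_inv, inv_one]; ring
      · exact one_div_pos.mpr hp0
      · exact one_div_pos.mpr (by linarith)
    have key := ENNReal.lintegral_mul_le_Lp_mul_Lq μ hpq
      (f := fun a => f a ^ p) (g := fun _ => (1 : ℝ≥0∞))
      (hf.pow_const p) aemeasurable_const
    have hfp : ∀ a, (f a ^ p) ^ p⁻¹ = f a := fun a => by
      rw [← ENNReal.rpow_mul, mul_inv_cancel₀ hp0.ne', ENNReal.rpow_one]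
    simp only [mul_one, one_div, inv_inv, ENNReal.one_rpow, lintegral_one, hfp] at key
    simpa using key

/-- Pseudoposterior numerator bound (case `β ≤ 1/2`): if `∫ R(θ,·)^{1/2} dQ ≤ e^{-s/2}` for all
`θ ∈ S`, then `∫ (∫ R^β dPi)^α dQ ≤ e^{-βαs} Pi(S)^α`. -/
theorem pseudoposterior_numerator_bound_small_beta
    {S X : Type*} [MeasurableSpace S] [MeasurableSpace X]
    (Q : Measure X) [IsProbabilityMeasure Q]
    (Pi : Measure S) [IsFiniteMeasure Pi]
    (R : S × X → ℝ≥0∞) (hR : Measurable R)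
    (β : ℝ) (hβ0 : 0 < β) (hβ1 : β ≤ 1 / 2)
    (α : ℝ) (hα0 : 0 < α) (hα1 : α < 1)
    (s : ℝ) (hs : 0 ≤ s)
    (hhalf : ∀ θ : S, ∫⁻ x, (R (θ, x)) ^ ((1 : ℝ) / 2) ∂Q
      ≤ ENNReal.ofReal (Real.exp (-s / 2))) :
    ∫⁻ x, (∫⁻ θ, (R (θ, x)) ^ β ∂Pi) ^ α ∂Q
      ≤ ENNReal.ofReal (Real.exp (-(β * α * s))) * (Pi Set.univ) ^ α := by
  set g : X → ℝ≥0∞ := fun x => ∫⁻ θ, R (θ, x) ^ ((1 : ℝ) / 2) ∂Pi with hg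
  have hRhalf : Measurable fun p : S × X => R p ^ ((1 : ℝ) / 2) := hR.pow_const _
  have hgmeas : Measurable g := by
    exact Measurable.lintegral_prod_left hRhalf
  -- Step A: pointwise Hölder
  have hA : ∀ x, ∫⁻ θ, R (θ, x) ^ β ∂Pi ≤ (g x) ^ (2 * β) * Pi Set.univ ^ (1 - 2 * β) := by
    intro x
    have h := aux_rpow_lintegral_le Pi (fun θ => R (θ, x) ^ ((1 : ℝ) / 2))
      (((hR.comp measurable_prodMk_right).pow_const _).aemeasurable)
      (p := 2 * β) (by linarith) (by linarith)
    calc ∫⁻ θ, R (θ, x) ^ β ∂Pi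
        = ∫⁻ θ, (R (θ, x) ^ ((1 : ℝ) / 2)) ^ (2 * β) ∂Pi := by
          congr 1; funext θ
          rw [← ENNReal.rpow_mul]
          congr 1; ring
      _ ≤ (g x) ^ (2 * β) * Pi Set.univ ^ (1 - 2 * β) := h
  -- Step B+C: integrate in x
  have h2βα : (0 : ℝ) < 2 * β * α := by positivity
  have h2βα1 : 2 * β * α ≤ 1 := by nlinarith
  have hB : ∫⁻ x, (∫⁻ θ, R (θ, x) ^ β ∂Pi) ^ α ∂Q
      ≤ (∫⁻ x, g x ^ (2 * β * α) ∂Q) * Pi Set.univ ^ ((1 - 2 * β) * α) := by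
    rw [← lintegral_mul_const'' _ ((hgmeas.pow_const _).aemeasurable)]
    apply lintegral_mono
    intro x
    calc (∫⁻ θ, R (θ, x) ^ β ∂Pi) ^ α
        ≤ ((g x) ^ (2 * β) * Pi Set.univ ^ (1 - 2 * β)) ^ α :=
          ENNReal.rpow_le_rpow (hA x) (le_of_lt hα0)
      _ = g x ^ (2 * β * α) * Pi Set.univ ^ ((1 - 2 * β) * α) := by
          rw [ENNReal.mul_rpow_of_nonneg _ _ (le_of_lt hα0), ← ENNReal.rpow_mul,
            ← ENNReal.rpow_mul]
  have hC : ∫⁻ x, g x ^ (2 * β * α) ∂Q ≤ (∫⁻ x, g x ∂Q) ^ (2 * β * α) := by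
    have := aux_rpow_lintegral_le Q g hgmeas.aemeasurable h2βα h2βα1
    simpa using this
  -- Step D: Fubini
  have hD : ∫⁻ x, g x ∂Q ≤ ENNReal.ofReal (Real.exp (-s / 2)) * Pi Set.univ := by
    rw [hg]
    rw [lintegral_lintegral_swap (f := fun x θ => R (θ, x) ^ ((1 : ℝ) / 2))
      ((hRhalf.comp measurable_swap).aemeasurable)]
    calc ∫⁻ θ, ∫⁻ x, R (θ, x) ^ ((1 : ℝ) / 2) ∂Q ∂Pi
        ≤ ∫⁻ _, ENNReal.ofReal (Real.exp (-s / 2)) ∂Pi := lintegral_mono fun θ => hhalf θ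
      _ = ENNReal.ofReal (Real.exp (-s / 2)) * Pi Set.univ := lintegral_const _
  -- Combine
  have hexp : (ENNReal.ofReal (Real.exp (-s / 2))) ^ (2 * β * α)
      = ENNReal.ofReal (Real.exp (-(β * α * s))) := by
    rw [ENNReal.ofReal_rpow_of_pos (Real.exp_pos _), ← Real.exp_mul]
    congr 2
    ring
  calc ∫⁻ x, (∫⁻ θ, R (θ, x) ^ β ∂Pi) ^ α ∂Q
      ≤ (∫⁻ x, g x ^ (2 * β * α) ∂Q) * Pi Set.univ ^ ((1 - 2 * β) * α) := hB
    _ ≤ (∫⁻ x, g x ∂Q) ^ (2 * β * α) * Pi Set.univ ^ ((1 - 2 * β) * α) := by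
        exact mul_le_mul_left hC _
    _ ≤ (ENNReal.ofReal (Real.exp (-s / 2)) * Pi Set.univ) ^ (2 * β * α) *
          Pi Set.univ ^ ((1 - 2 * β) * α) := by
        exact mul_le_mul_left (ENNReal.rpow_le_rpow hD (le_of_lt h2βα)) _
    _ = ENNReal.ofReal (Real.exp (-(β * α * s))) * (Pi Set.univ) ^ α := by
        rw [ENNReal.mul_rpow_of_nonneg _ _ (le_of_lt h2βα), hexp, mul_assoc,
          ← ENNReal.rpow_add_of_nonneg _ _ (le_of_lt h2βα) (by nlinarith)]
        congr 1
        ring_nf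
end

section
/- Fix 1/2 < β < 1 and 0 < α < 1. Let Q be a probability measure on X, Π a finite measure on S, and R : S × X → [0,∞) measurable with ∫_X R(θ,x)^{1/2} dQ(x) ≤ e^{-s/2} and ∫_X R(θ,x) dQ(x) ≤ 1 for all θ ∈ S and some s ≥ 0. Then ∫_X ( ∫_S R(θ,x)^β dΠ(θ) )^α dQ(x) ≤ e^{-(1-β)αs} Π(S)^α. -/
open MeasureTheory Real
open scoped ENNReal

/-- Pseudoposterior numerator bound (case `β > 1/2`): if `∫ R(θ,·)^{1/2} dQ ≤ e^{-s/2}` and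
`∫ R(θ,·) dQ ≤ 1` for all `θ ∈ S`, then `∫ (∫ R^β dPi)^α dQ ≤ e^{-(1-β)αs} Pi(S)^α`. -/
theorem pseudoposterior_numerator_bound_large_beta
    {S X : Type*} [MeasurableSpace S] [MeasurableSpace X]
    (Q : Measure X) [IsProbabilityMeasure Q]
    (Pi : Measure S) [IsFiniteMeasure Pi]
    (R : S × X → ℝ≥0∞) (hR : Measurable R)
    (β : ℝ) (hβ0 : 1 / 2 < β) (hβ1 : β < 1)
    (α : ℝ) (hα0 : 0 < α) (hα1 : α < 1)
    (s : ℝ) (hs : 0 ≤ s)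
    (hhalf : ∀ θ : S, ∫⁻ x, (R (θ, x)) ^ ((1 : ℝ) / 2) ∂Q
      ≤ ENNReal.ofReal (Real.exp (-s / 2)))
    (hone : ∀ θ : S, ∫⁻ x, R (θ, x) ∂Q ≤ 1) :
    ∫⁻ x, (∫⁻ θ, (R (θ, x)) ^ β ∂Pi) ^ α ∂Q
      ≤ ENNReal.ofReal (Real.exp (-((1 - β) * α * s))) * (Pi Set.univ) ^ α := by
  set lam : ℝ := 2 * (1 - β) with hlam
  have hlam0 : 0 < lam := by rw [hlam]; linarith
  have hlam1 : lam < 1 := by rw [hlam]; linarith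
  have hRmeas : ∀ θ : S, Measurable fun x => R (θ, x) := fun θ =>
    hR.comp measurable_prodMk_left
  -- Step A: per-θ Hölder bound
  have stepA : ∀ θ : S, ∫⁻ x, (R (θ, x)) ^ β ∂Q
      ≤ ENNReal.ofReal (Real.exp (-((1 - β) * s))) := by
    intro θ
    have hconj : (1 / lam).HolderConjugate (1 / (1 - lam)) := by
      rw [Real.holderConjugate_iff]; constructor
      · rw [lt_div_iff₀ hlam0]; linarith
      · rw [one_div, one_div, inv_inv, inv_inv]; ring
    have hpt : ∀ x, (R (θ, x)) ^ β = (R (θ, x)) ^ (lam / 2) * (R (θ, x)) ^ (1 - lam) := by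
      intro x
      rw [← ENNReal.rpow_add_of_nonneg _ _ (by linarith) (by linarith)]
      congr 1; rw [hlam]; ring
    calc ∫⁻ x, (R (θ, x)) ^ β ∂Q
        = ∫⁻ x, (R (θ, x)) ^ (lam / 2) * (R (θ, x)) ^ (1 - lam) ∂Q :=
          lintegral_congr fun x => hpt x
      _ ≤ (∫⁻ x, ((R (θ, x)) ^ (lam / 2)) ^ (1 / lam) ∂Q) ^ (1 / (1 / lam)) *
          (∫⁻ x, ((R (θ, x)) ^ (1 - lam)) ^ (1 / (1 - lam)) ∂Q) ^ (1 / (1 / (1 - lam))) :=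
          ENNReal.lintegral_mul_le_Lp_mul_Lq Q hconj
            ((hRmeas θ).pow_const _).aemeasurable ((hRmeas θ).pow_const _).aemeasurable
      _ = (∫⁻ x, (R (θ, x)) ^ ((1 : ℝ) / 2) ∂Q) ^ lam *
          (∫⁻ x, R (θ, x) ∂Q) ^ (1 - lam) := by
          rw [one_div_one_div, one_div_one_div]
          congr 1
          · congr 1
            refine lintegral_congr fun x => ?_
            rw [← ENNReal.rpow_mul]
            congr 1
            field_simp
          · congr 1
            refine lintegral_congr fun x => ?_
            rw [← ENNReal.rpow_mul, mul_one_div, div_self (by linarith), ENNReal.rpow_one]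
      _ ≤ (ENNReal.ofReal (Real.exp (-s / 2))) ^ lam * (1 : ℝ≥0∞) ^ (1 - lam) := by
          exact mul_le_mul' (ENNReal.rpow_le_rpow (hhalf θ) hlam0.le)
            (ENNReal.rpow_le_rpow (hone θ) (by linarith))
      _ = ENNReal.ofReal (Real.exp (-((1 - β) * s))) := by
          rw [ENNReal.one_rpow, mul_one,
            ENNReal.ofReal_rpow_of_pos (Real.exp_pos _), ← Real.exp_mul]
          congr 1
          rw [hlam]; ring
  -- measurability of the inner integral
  have hRβ : Measurable fun p : S × X => R p ^ β := hR.pow_const β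
  have hF : Measurable fun x => ∫⁻ θ, (R (θ, x)) ^ β ∂Pi :=
    Measurable.lintegral_prod_left' hRβ
  set F : X → ℝ≥0∞ := fun x => ∫⁻ θ, (R (θ, x)) ^ β ∂Pi with hFdef
  -- Step B: Jensen via Hölder with exponents 1/α, 1/(1-α)
  have hconjα : (1 / α).HolderConjugate (1 / (1 - α)) := by
    rw [Real.holderConjugate_iff]; constructor
    · rw [lt_div_iff₀ hα0]; linarith
    · rw [one_div, one_div, inv_inv, inv_inv]; ring
  have jensen : ∫⁻ x, F x ^ α ∂Q ≤ (∫⁻ x, F x ∂Q) ^ α := by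
    calc ∫⁻ x, F x ^ α ∂Q
        = ∫⁻ x, F x ^ α * (1 : ℝ≥0∞) ∂Q := by
          simp
      _ ≤ (∫⁻ x, (F x ^ α) ^ (1 / α) ∂Q) ^ (1 / (1 / α)) *
          (∫⁻ x, ((1 : ℝ≥0∞)) ^ (1 / (1 - α)) ∂Q) ^ (1 / (1 / (1 - α))) :=
          ENNReal.lintegral_mul_le_Lp_mul_Lq Q hconjα
            (hF.pow_const _).aemeasurable aemeasurable_const
      _ = (∫⁻ x, F x ∂Q) ^ α := by
          rw [one_div_one_div]
          have h1 : ∀ x, (F x ^ α) ^ (1 / α) = F x := by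
            intro x
            rw [← ENNReal.rpow_mul, mul_one_div, div_self hα0.ne', ENNReal.rpow_one]
          rw [lintegral_congr h1]
          simp [ENNReal.one_rpow]
  -- Step C: Fubini and conclusion
  have swap : ∫⁻ x, F x ∂Q = ∫⁻ θ, ∫⁻ x, (R (θ, x)) ^ β ∂Q ∂Pi := by
    refine lintegral_lintegral_swap ?_
    exact ((hRβ.comp measurable_swap)).aemeasurable
  have hinner : ∫⁻ x, F x ∂Q
      ≤ ENNReal.ofReal (Real.exp (-((1 - β) * s))) * Pi Set.univ := by
    rw [swap]
    calc ∫⁻ θ, ∫⁻ x, (R (θ, x)) ^ β ∂Q ∂Pi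
        ≤ ∫⁻ _, ENNReal.ofReal (Real.exp (-((1 - β) * s))) ∂Pi :=
          lintegral_mono fun θ => stepA θ
      _ = ENNReal.ofReal (Real.exp (-((1 - β) * s))) * Pi Set.univ := lintegral_const _
  calc ∫⁻ x, F x ^ α ∂Q
      ≤ (∫⁻ x, F x ∂Q) ^ α := jensen
    _ ≤ (ENNReal.ofReal (Real.exp (-((1 - β) * s))) * Pi Set.univ) ^ α :=
        ENNReal.rpow_le_rpow hinner hα0.le
    _ = ENNReal.ofReal (Real.exp (-((1 - β) * α * s))) * (Pi Set.univ) ^ α := by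
        rw [ENNReal.mul_rpow_of_nonneg _ _ hα0.le,
          ENNReal.ofReal_rpow_of_pos (Real.exp_pos _), ← Real.exp_mul]
        congr 2
        ring
end
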